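/- Let G be a triangle-free simple graph on n vertices. Then every word that word-represents G has length at least 2n − 2. -/

import Mathlib

variable {V : Type*}

/-- The restriction of a word `w` to the letters `x` and `y`. -/
def restrictWord [DecidableEq V] (w : List V) (x y : V) : List V :=
  w.filter fun z => decide (z = x ∨ z = y)

/-- `x` and `y` alternate in `w`: the restriction of `w` to `{x, y}` has no two
consecutive equal letters. -/
def Alternates [DecidableEq V] (w : List V) (x y : V) : Prop :=
  (restrictWord w x y).Chain' (· ≠ ·)

/-- `w` word-represents the simple graph `G`: every vertex occurs in `w`, and two distinct
vertices are adjacent iff they alternate in `w`. -/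
def Represents [DecidableEq V] (G : SimpleGraph V) (w : List V) : Prop :=
  (∀ v : V, v ∈ w) ∧ ∀ x y : V, x ≠ y → (G.Adj x y ↔ Alternates w x y)

/-- `ℓ(G)`: the minimal length of a word-representant of `G`. -/
noncomputable def minRepLength [DecidableEq V] (G : SimpleGraph V) : ℕ :=
  sInf {n | ∃ w : List V, Represents G w ∧ w.length = n}

lemma restrict_length [DecidableEq V] (w : List V) {x y : V} (h : x ≠ y) :
    (restrictWord w x y).length = w.count x + w.count y := by
  induction w with
  | nil => simp [restrictWord]
  | cons a t ih =>
    simp only [restrictWord, List.filter_cons] at *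
    by_cases hx : a = x <;> by_cases hy : a = y <;>
      simp_all [List.count_cons] <;> omega

lemma alt_of_single [DecidableEq V] {w : List V} {x y : V}
    (hx : w.count x = 1) (hy : w.count y = 1) (hxy : x ≠ y) : Alternates w x y := by
  have cx : (restrictWord w x y).count x = w.count x := by
    rw [restrictWord, List.count_filter]; simp
  have hl : (restrictWord w x y).length = 2 := by
    rw [restrict_length w hxy, hx, hy]
  obtain ⟨a, b, hab⟩ := List.length_eq_two.mp hl
  rw [Alternates, hab, List.Chain', List.isChain_pair]
  intro hE
  subst hE
  rw [hab, hx] at cx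
  by_cases hax : a = x <;> simp [List.count_cons, hax] at cx

/-- Every word that word-represents a triangle-free graph on `n` vertices
has length at least `2n − 2`. -/
theorem triangle_free_length_lower_bound [Fintype V] [DecidableEq V]
    (G : SimpleGraph V) (n : ℕ) (hn : Fintype.card V = n) (hfree : G.CliqueFree 3)
    (w : List V) (hw : Represents G w) :
    2 * n - 2 ≤ w.length := by
  classical
  set S := Finset.univ.filter (fun v => w.count v = 1) with hS
  have hScard : S.card ≤ 2 := by
    by_contra h
    push_neg at h
    obtain ⟨t, ht, htc⟩ := Finset.exists_subset_card_eq (show 3 ≤ S.card from h)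
    refine hfree t ⟨?_, htc⟩
    intro x hx y hy hxy
    have hx1 : w.count x = 1 := (Finset.mem_filter.mp (ht hx)).2
    have hy1 : w.count y = 1 := (Finset.mem_filter.mp (ht hy)).2
    exact (hw.2 x y hxy).mpr (alt_of_single hx1 hy1 hxy)
  have hsum : ∑ v : V, w.count v = w.length := by
    simpa using Multiset.sum_count_eq_card
      (s := Finset.univ) (m := (↑w : Multiset V)) (fun a _ => Finset.mem_univ a)
  have h1 : ∑ v ∈ S, w.count v = S.card := by
    rw [Finset.sum_congr rfl (fun v hv => (Finset.mem_filter.mp hv).2)]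
    simp [hS]
  have h2 : (Finset.univ \ S).card * 2 ≤ ∑ v ∈ Finset.univ \ S, w.count v := by
    have key : ∀ v ∈ Finset.univ \ S, 2 ≤ w.count v := by
      intro v hv
      have h0 : 0 < w.count v := List.count_pos_iff.mpr (hw.1 v)
      have h1' : w.count v ≠ 1 := by
        have := (Finset.mem_sdiff.mp hv).2
        simpa [hS] using this
      omega
    simpa [smul_eq_mul] using
      Finset.card_nsmul_le_sum (Finset.univ \ S) (fun v => w.count v) 2 key
  have hsplit : ∑ v ∈ Finset.univ \ S, w.count v + ∑ v ∈ S, w.count v = w.length := by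
    rw [Finset.sum_sdiff (Finset.subset_univ S), hsum]
  have hcard : (Finset.univ \ S).card = n - S.card := by
    rw [Finset.card_sdiff_of_subset (Finset.subset_univ S), Finset.card_univ, hn]
  have hSn : S.card ≤ n := by
    rw [← hn, ← Finset.card_univ]; exact Finset.card_le_card (Finset.subset_univ S)
  omega
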